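/- Let d ≥ 3 and let N ≥ 1 be an integer. There exists a constant c = c(d) > 0 such that for every finitely supported φ : 𝕃_N → ℝ with step extension Φ, every standard coordinate unit vector e_i of ℝ^d, and every real s > 0, one has ∫_{ℝ^d} |Φ(z + s·e_i) − Φ(z)|² dz ≤ c · s · max(s, 1/N) · E_N(φ,φ). -/

import Mathlib

open MeasureTheory
open scoped ENNReal

/-- Two points of `ℤ^d` are neighbours when their Euclidean distance is `1`
(equivalently, the corresponding points of `𝕃_N = (1/N)ℤ^d` are at distance `1/N`). -/
def IsLatticeNeighbor {d : ℕ} (x y : Fin d → ℤ) : Prop :=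
  (∑ i, (x i - y i) ^ 2) = 1

/-- The discrete Dirichlet form
`E_N(φ,φ) = (1/(2N^{d−2})) Σ_{ordered neighbour pairs (y,y')} (1/2)(φ(y')−φ(y))² ∈ [0,∞]`
of a function on the scaled lattice `𝕃_N`, parametrized by `ℤ^d`. -/
noncomputable def discreteDirichletForm (d N : ℕ) (φ : (Fin d → ℤ) → ℝ) : ℝ≥0∞ :=
  ENNReal.ofReal (1 / (2 * (N : ℝ) ^ ((d : ℝ) - 2))) *
    ∑' p : {p : (Fin d → ℤ) × (Fin d → ℤ) // IsLatticeNeighbor p.1 p.2},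
      ENNReal.ofReal ((1 / 2) * (φ p.1.2 - φ p.1.1) ^ 2)

/-- The step extension of `φ : 𝕃_N → ℝ`, equal to `φ(y)` on `y + [0,1/N)^d`. -/
noncomputable def stepExtension (d N : ℕ) (φ : (Fin d → ℤ) → ℝ) (z : Fin d → ℝ) : ℝ :=
  φ (fun i => ⌊z i * N⌋)

noncomputable def latticeBox (d N : ℕ) (y : Fin d → ℤ) : Set (Fin d → ℝ) :=
  Set.pi Set.univ fun i => Set.Ico ((y i : ℝ)/N) (((y i : ℝ)+1)/N)

lemma mem_latticeBox {d N : ℕ} (hN : 0 < (N:ℝ)) {y : Fin d → ℤ} {z : Fin d → ℝ} :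
    z ∈ latticeBox d N y ↔ ∀ i, ⌊z i * N⌋ = y i := by
  simp only [latticeBox, Set.mem_pi, Set.mem_univ, forall_true_left, Set.mem_Ico]
  refine forall_congr' fun i => ?_
  rw [Int.floor_eq_iff, div_le_iff₀ hN, lt_div_iff₀ hN]

lemma latticeBox_measurable {d N : ℕ} (y : Fin d → ℤ) :
    MeasurableSet (latticeBox d N y) :=
  MeasurableSet.univ_pi fun _ => measurableSet_Ico

lemma latticeBox_disjoint {d N : ℕ} (hN : 0 < (N:ℝ)) :
    Pairwise (Function.onFun Disjoint (latticeBox d N)) := by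
  intro y y' hyy'
  rw [Function.onFun, Set.disjoint_left]
  intro z hz hz'
  exact hyy' (funext fun i => ((mem_latticeBox hN).mp hz i).symm.trans
    ((mem_latticeBox hN).mp hz' i))

lemma latticeBox_cover {d N : ℕ} (hN : 0 < (N:ℝ)) :
    (⋃ y, latticeBox d N y) = Set.univ := by
  ext z
  simp only [Set.mem_iUnion, Set.mem_univ, iff_true]
  exact ⟨fun i => ⌊z i * N⌋, (mem_latticeBox hN).mpr fun i => rfl⟩

lemma volume_slice_le {d N : ℕ} (hN : 0 < (N:ℝ)) (hd1 : 1 ≤ d) (y : Fin d → ℤ) (i : Fin d)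
    (c b : ℝ) (hb : min 1 (1-c) ≤ b) (hb0 : 0 ≤ b) :
    volume ({z : Fin d → ℝ | ((y i : ℝ) + c)/N ≤ z i} ∩ latticeBox d N y)
      ≤ ENNReal.ofReal (b / (N:ℝ)^d) := by
  classical
  set L : ℝ := max (((y i:ℝ)+c)/N) ((y i:ℝ)/N) with hL
  set R : ℝ := ((y i:ℝ)+1)/N with hR
  have hsub : {z : Fin d → ℝ | ((y i : ℝ) + c)/N ≤ z i} ∩ latticeBox d N y ⊆
      Set.pi Set.univ (Function.update
        (fun i' => Set.Ico ((y i' : ℝ)/N) (((y i' : ℝ)+1)/N)) i (Set.Ico L R)) := by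
    rintro z ⟨hzS, hzB⟩ i' _
    rcases eq_or_ne i' i with rfl | hii
    · rw [Function.update_self]
      have hB := hzB i' (Set.mem_univ i')
      exact ⟨max_le hzS hB.1, hB.2⟩
    · rw [Function.update_of_ne hii]
      exact hzB i' (Set.mem_univ i')
  refine (measure_mono hsub).trans ?_
  rw [volume_pi_pi]
  rw [Finset.prod_eq_mul_prod_sdiff_singleton_of_mem (Finset.mem_univ i)]
  rw [Function.update_self]
  have hpc : (∏ x ∈ Finset.univ \ {i},
        volume (Function.update (fun i' => Set.Ico ((y i' : ℝ)/N) (((y i' : ℝ)+1)/N)) i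
          (Set.Ico L R) x))
      = ∏ x ∈ Finset.univ \ {i}, volume (Set.Ico ((y x : ℝ)/N) (((y x : ℝ)+1)/N)) :=
    Finset.prod_congr rfl fun i' hi' => congrArg volume
      (Function.update_of_ne (by simpa using (Finset.mem_sdiff.mp hi').2) _ _)
  rw [hpc]
  have hlen : ∀ i' : Fin d, volume (Set.Ico ((y i' : ℝ)/N) (((y i' : ℝ)+1)/N))
      = ENNReal.ofReal (1/N) := by
    intro i'
    rw [Real.volume_Ico, div_sub_div_same]
    norm_num
  have hcard : (Finset.univ \ {i}).card = d - 1 := by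
    rw [Finset.card_sdiff_of_subset (Finset.subset_univ _), Finset.card_univ]
    simp
  have hprod : (∏ i' ∈ Finset.univ \ {i},
      volume (Set.Ico ((y i' : ℝ)/N) (((y i' : ℝ)+1)/N))) = ENNReal.ofReal ((1/N)^(d-1)) := by
    rw [Finset.prod_congr rfl fun i' _ => hlen i', Finset.prod_const, hcard,
      ← ENNReal.ofReal_pow (by positivity)]
  rw [hprod, Real.volume_Ico]
  have h1 : R - L ≤ b / N := by
    have e1 : R - ((y i:ℝ)+c)/N = (1-c)/N := by rw [hR, div_sub_div_same]; ring_nf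
    have e2 : R - (y i:ℝ)/N = 1/N := by rw [hR, div_sub_div_same]; ring_nf
    have h2 : min 1 (1-c) / N ≤ b / N := by gcongr
    refine le_trans ?_ h2
    rcases le_total (1:ℝ) (1-c) with h | h
    · rw [min_eq_left h, ← e2]
      have : (y i:ℝ)/N ≤ L := le_max_right _ _
      linarith
    · rw [min_eq_right h, ← e1]
      have : ((y i:ℝ)+c)/N ≤ L := le_max_left _ _
      linarith
  calc ENNReal.ofReal (R - L) * ENNReal.ofReal ((1/N)^(d-1))
      ≤ ENNReal.ofReal (b/N) * ENNReal.ofReal ((1/N)^(d-1)) := by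
        exact mul_le_mul_left (ENNReal.ofReal_le_ofReal h1) _
    _ = ENNReal.ofReal (b/N * (1/N)^(d-1)) := (ENNReal.ofReal_mul (by positivity)).symm
    _ = ENNReal.ofReal (b / (N:ℝ)^d) := by
        congr 1
        have hNd : (N:ℝ)^d = N * N^(d-1) := by
          rw [← pow_succ']
          congr 1
          omega
        rw [hNd, one_div, inv_pow]
        field_simp

section Pointwise
variable {d N : ℕ}

-- pointwise telescoping + Cauchy-Schwarz bound
lemma pointwise_bound (N : ℕ) (hN : 0 < (N:ℝ)) (φ : (Fin d → ℤ) → ℝ) (i : Fin d)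
    (s : ℝ) (hs : 0 < s) (z : Fin d → ℝ) :
    ENNReal.ofReal ((stepExtension d N φ (z + s • (Pi.single i 1 : Fin d → ℝ))
        - stepExtension d N φ z) ^ 2)
      ≤ ∑ j ∈ Finset.range (⌊s * N⌋.toNat + 1), ENNReal.ofReal
          (((⌊s * N⌋.toNat + 1 : ℕ) : ℝ) *
            (if (j:ℤ) < ⌊z i * N + s * N⌋ - ⌊z i * N⌋ then
              (φ ((fun i' => ⌊z i' * N⌋) + (j+1) • (Pi.single i 1 : Fin d → ℤ))
                - φ ((fun i' => ⌊z i' * N⌋) + j • (Pi.single i 1 : Fin d → ℤ)))^2 else 0)) := by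
  classical
  set t : ℝ := s * N with htdef
  have ht0 : 0 < t := mul_pos hs hN
  set m : ℕ := ⌊t⌋.toNat + 1 with hmdef
  set e : Fin d → ℤ := Pi.single i 1 with hedef
  set Y : Fin d → ℤ := fun i' => ⌊z i' * N⌋ with hYdef
  set k : ℤ := ⌊z i * N + t⌋ - ⌊z i * N⌋ with hkdef
  have hk0 : 0 ≤ k := sub_nonneg.mpr (Int.floor_mono (by linarith))
  set K : ℕ := k.toNat with hKdef
  have hkm : k ≤ ⌊t⌋ + 1 := by
    have l1 := Int.lt_floor_add_one (z i * N)
    have l2 := Int.lt_floor_add_one t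
    have l3 : (⌊z i * N + t⌋ : ℝ) ≤ z i * N + t := Int.floor_le _
    have : ⌊z i * N + t⌋ < ⌊z i * N⌋ + ⌊t⌋ + 2 := by
      have : (⌊z i * N + t⌋ : ℝ) < ((⌊z i * N⌋ + ⌊t⌋ + 2 : ℤ) : ℝ) := by push_cast; linarith
      exact_mod_cast this
    omega
  have hKm : K ≤ m := by omega
  have hstep2 : stepExtension d N φ (z + s • (Pi.single i 1 : Fin d → ℝ)) = φ (Y + K • e) := by
    unfold stepExtension
    congr 1
    funext i'
    rcases eq_or_ne i' i with rfl | hii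
    · have harg : (z + s • (Pi.single i' 1 : Fin d → ℝ)) i' * N = z i' * N + t := by
        simp [Pi.single_apply, htdef]; ring
      rw [harg]
      have : (Y + K • e) i' = Y i' + (K : ℤ) * e i' := by
        simp [Pi.add_apply, Pi.smul_apply, nsmul_eq_mul]
      rw [this, hedef]
      simp only [Pi.single_apply, if_true, eq_self_iff_true, mul_one]
      rw [hKdef, Int.toNat_of_nonneg hk0, hkdef]
      simp only [hYdef]
      omega
    · have harg : (z + s • (Pi.single i 1 : Fin d → ℝ)) i' * N = z i' * N := by
        simp [Pi.single_apply, hii]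
      rw [harg]
      have : (Y + K • e) i' = Y i' + (K : ℤ) * e i' := by
        simp [Pi.add_apply, Pi.smul_apply, nsmul_eq_mul]
      rw [this, hedef]
      simp [Pi.single_apply, hii, hYdef]
      
  have hstep1 : stepExtension d N φ z = φ Y := rfl
  have htel : φ (Y + K • e) - φ Y = ∑ j ∈ Finset.range K, (φ (Y + (j+1) • e) - φ (Y + j • e)) := by
    rw [Finset.sum_range_sub (f := fun n => φ (Y + n • e)) K]
    simp
  have hsub : ∑ j ∈ Finset.range K, (if (j:ℤ) < k then (φ (Y + (j+1) • e) - φ (Y + j • e)) else 0)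
      = ∑ j ∈ Finset.range m, (if (j:ℤ) < k then (φ (Y + (j+1) • e) - φ (Y + j • e)) else 0) :=
    Finset.sum_subset (Finset.range_subset_range.mpr hKm) (fun x _ hx => if_neg (by
      rw [Finset.mem_range, not_lt] at hx
      omega))
  have hposs : ∑ j ∈ Finset.range K, (if (j:ℤ) < k then (φ (Y + (j+1) • e) - φ (Y + j • e)) else 0)
      = ∑ j ∈ Finset.range K, (φ (Y + (j+1) • e) - φ (Y + j • e)) :=
    Finset.sum_congr rfl fun x hx => if_pos (by rw [Finset.mem_range] at hx; omega)
  have hcs : (∑ j ∈ Finset.range m, if (j:ℤ) < k then (φ (Y + (j+1) • e) - φ (Y + j • e)) else 0)^2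
      ≤ (m:ℝ) * ∑ j ∈ Finset.range m,
          (if (j:ℤ) < k then (φ (Y + (j+1) • e) - φ (Y + j • e))^2 else 0) := by
    have hc := sq_sum_le_card_mul_sum_sq (s := Finset.range m)
      (f := fun j => if (j:ℤ) < k then (φ (Y + (j+1) • e) - φ (Y + j • e)) else 0)
    rw [Finset.card_range] at hc
    refine hc.trans_eq ?_
    congr 1
    refine Finset.sum_congr rfl fun x _ => ?_
    split_ifs <;> simp
  calc ENNReal.ofReal ((stepExtension d N φ (z + s • (Pi.single i 1 : Fin d → ℝ))
        - stepExtension d N φ z) ^ 2)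
      = ENNReal.ofReal ((∑ j ∈ Finset.range m,
          if (j:ℤ) < k then (φ (Y + (j+1) • e) - φ (Y + j • e)) else 0)^2) := by
        rw [hstep2, hstep1, htel, ← hposs, hsub]
    _ ≤ ENNReal.ofReal ((m:ℝ) * ∑ j ∈ Finset.range m,
          (if (j:ℤ) < k then (φ (Y + (j+1) • e) - φ (Y + j • e))^2 else 0)) :=
        ENNReal.ofReal_le_ofReal hcs
    _ = ∑ j ∈ Finset.range m, ENNReal.ofReal ((m:ℝ) *
          (if (j:ℤ) < k then (φ (Y + (j+1) • e) - φ (Y + j • e))^2 else 0)) := by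
        rw [Finset.mul_sum, ENNReal.ofReal_sum_of_nonneg]
        intro j _
        have : (0:ℝ) ≤ (if (j:ℤ) < k then (φ (Y + (j+1) • e) - φ (Y + j • e))^2 else 0) := by
          split_ifs <;> positivity
        positivity

end Pointwise

-- the integral of one telescoping term
lemma integral_term_le {d N : ℕ} (hN : 0 < (N:ℝ)) (hd1 : 1 ≤ d) (φ : (Fin d → ℤ) → ℝ)
    (i : Fin d) (t : ℝ) (ht : 0 < t) (M : ℝ) (hM : 0 ≤ M) (j : ℕ) :
    (∫⁻ z : Fin d → ℝ, ENNReal.ofReal (M *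
        (if (j:ℤ) < ⌊z i * N + t⌋ - ⌊z i * N⌋ then
          (φ ((fun i' => ⌊z i' * N⌋) + (j+1) • (Pi.single i 1 : Fin d → ℤ))
            - φ ((fun i' => ⌊z i' * N⌋) + j • (Pi.single i 1 : Fin d → ℤ)))^2 else 0)))
      ≤ ENNReal.ofReal (min 1 t / (N:ℝ)^d) *
          ∑' y : Fin d → ℤ, ENNReal.ofReal (M *
            (φ (y + (Pi.single i 1 : Fin d → ℤ)) - φ y)^2) := by
  classical
  set e : Fin d → ℤ := Pi.single i 1 with hedef
  set g : (Fin d → ℤ) → ℝ := fun y => φ (y + e) - φ y with hgdef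
  set h : (Fin d → ℝ) → ℝ≥0∞ := fun z => ENNReal.ofReal (M *
    (if (j:ℤ) < ⌊z i * N + t⌋ - ⌊z i * N⌋ then
      (φ ((fun i' => ⌊z i' * N⌋) + (j+1) • e) - φ ((fun i' => ⌊z i' * N⌋) + j • e))^2 else 0))
    with hhdef
  have key : ∀ y : Fin d → ℤ, (φ (y + (j+1) • e) - φ (y + j • e)) = g (y + j • e) := by
    intro y
    rw [hgdef]
    simp only
    congr 2
    rw [succ_nsmul, ← add_assoc]
  have hcover : (∫⁻ z, h z) = ∑' y : Fin d → ℤ, ∫⁻ z in latticeBox d N y, h z := by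
    rw [← setLIntegral_univ, ← latticeBox_cover hN,
      lintegral_iUnion latticeBox_measurable (latticeBox_disjoint hN)]
  have hbox : ∀ y : Fin d → ℤ, (∫⁻ z in latticeBox d N y, h z)
      ≤ ENNReal.ofReal (M * (g (y + j • e))^2) * ENNReal.ofReal (min 1 t / (N:ℝ)^d) := by
    intro y
    set S : Set (Fin d → ℝ) := {z | ((y i : ℝ) + ((j:ℝ) + 1 - t))/N ≤ z i} with hSdef
    have hSmeas : MeasurableSet S := measurableSet_le measurable_const (measurable_pi_apply i)
    have hcongr : (∫⁻ z in latticeBox d N y, h z)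
        = ∫⁻ z in latticeBox d N y,
            S.indicator (fun _ => ENNReal.ofReal (M * (g (y + j • e))^2)) z := by
      refine setLIntegral_congr_fun (latticeBox_measurable y)
        (fun z hz => ?_)
      have hfl : ∀ i', ⌊z i' * N⌋ = y i' := (mem_latticeBox hN).mp hz
      have hYz : (fun i' => ⌊z i' * (N:ℝ)⌋) = y := funext hfl
      have hcond : ((j:ℤ) < ⌊z i * N + t⌋ - ⌊z i * N⌋) ↔ z ∈ S := by
        rw [hfl i, hSdef, Set.mem_setOf_eq, div_le_iff₀ hN]
        rw [show ((j:ℤ) < ⌊z i * N + t⌋ - y i) ↔ ((y i + j + 1 : ℤ) ≤ ⌊z i * N + t⌋) by omega]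
        rw [Int.le_floor]
        push_cast
        constructor <;> intro hh <;> linarith
      rw [hhdef]
      simp only
      by_cases hzS : z ∈ S
      · rw [if_pos (hcond.mpr hzS), hYz, Set.indicator_of_mem hzS, key]
      · rw [if_neg (fun hc => hzS (hcond.mp hc)), Set.indicator_of_notMem hzS, mul_zero]
        simp
    rw [hcongr, lintegral_indicator hSmeas, setLIntegral_const, Measure.restrict_apply hSmeas]
    refine mul_le_mul_right ?_ _
    refine volume_slice_le hN hd1 y i ((j:ℝ) + 1 - t) (min 1 t) ?_ ?_
    · have : (1 : ℝ) - ((j:ℝ) + 1 - t) = t - j := by ring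
      rw [this]
      exact min_le_min le_rfl (by linarith [Nat.cast_nonneg (α := ℝ) j])
    · exact le_min (by norm_num) ht.le
  calc (∫⁻ z, h z) = ∑' y : Fin d → ℤ, ∫⁻ z in latticeBox d N y, h z := hcover
    _ ≤ ∑' y : Fin d → ℤ,
        ENNReal.ofReal (M * (g (y + j • e))^2) * ENNReal.ofReal (min 1 t / (N:ℝ)^d) :=
      ENNReal.tsum_le_tsum hbox
    _ = (∑' y : Fin d → ℤ, ENNReal.ofReal (M * (g (y + j • e))^2))
        * ENNReal.ofReal (min 1 t / (N:ℝ)^d) := ENNReal.tsum_mul_right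
    _ = (∑' y : Fin d → ℤ, ENNReal.ofReal (M * (g y)^2))
        * ENNReal.ofReal (min 1 t / (N:ℝ)^d) := by
      congr 1
      have hteq := (Equiv.addRight (j • e)).tsum_eq (fun y => ENNReal.ofReal (M * (g y)^2))
      simpa [Equiv.coe_addRight] using hteq
    _ = ENNReal.ofReal (min 1 t / (N:ℝ)^d)
        * ∑' y : Fin d → ℤ, ENNReal.ofReal (M * (g y)^2) := mul_comm _ _

/-- The translation estimate (5.36) from the proof of Proposition 5.6 of the paper:
for finitely supported `φ` on `𝕃_N` with step extension `Φ`, and every coordinate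
direction `eᵢ` and `s > 0`,
`∫ |Φ(z + s·eᵢ) − Φ(z)|² dz ≤ c·s·max(s, 1/N)·E_N(φ,φ)` with `c = c(d)`. -/
theorem step_extension_translation_estimate (d : ℕ) (hd : 3 ≤ d) :
    ∃ c : ℝ, 0 < c ∧
      ∀ N : ℕ, 1 ≤ N → ∀ φ : (Fin d → ℤ) → ℝ, (Function.support φ).Finite →
      ∀ (i : Fin d) (s : ℝ), 0 < s →
        (∫⁻ z : Fin d → ℝ, ENNReal.ofReal
            ((stepExtension d N φ (z + s • (Pi.single i 1 : Fin d → ℝ)) - stepExtension d N φ z) ^ 2))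
          ≤ ENNReal.ofReal (c * s * max s (1 / (N : ℝ))) * discreteDirichletForm d N φ := by
  classical
  refine ⟨16, by norm_num, ?_⟩
  intro N hN φ hφ i s hs
  have hN0 : (0:ℝ) < N := by exact_mod_cast hN
  set t : ℝ := s * N with htdef
  have ht0 : 0 < t := mul_pos hs hN0
  have hft : 0 ≤ ⌊t⌋ := Int.floor_nonneg.mpr ht0.le
  set m : ℕ := ⌊t⌋.toNat + 1 with hmdef
  set e : Fin d → ℤ := Pi.single i 1 with hedef
  set g : (Fin d → ℤ) → ℝ := fun y => φ (y + e) - φ y with hgdef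
  set T : ℝ≥0∞ := ∑' p : {p : (Fin d → ℤ) × (Fin d → ℤ) // IsLatticeNeighbor p.1 p.2},
      ENNReal.ofReal ((1 / 2) * (φ p.1.2 - φ p.1.1) ^ 2) with hTdef
  set h : ℕ → (Fin d → ℝ) → ℝ≥0∞ := fun j z => ENNReal.ofReal ((m : ℝ) *
      (if (j:ℤ) < ⌊z i * N + t⌋ - ⌊z i * N⌋ then
        (φ ((fun i' => ⌊z i' * N⌋) + (j+1) • e) - φ ((fun i' => ⌊z i' * N⌋) + j • e))^2 else 0))
    with hhdef
  -- measurability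
  have hYmeas : Measurable (fun z : Fin d → ℝ => (fun i' => ⌊z i' * (N:ℝ)⌋ : Fin d → ℤ)) :=
    measurable_pi_lambda _ fun i' => ((measurable_pi_apply i').mul_const _).floor
  have hkmeas : Measurable (fun z : Fin d → ℝ => ⌊z i * (N:ℝ) + t⌋ - ⌊z i * (N:ℝ)⌋) :=
    by fun_prop
  have hhmeas : ∀ j, Measurable (h j) := by
    intro j
    apply ENNReal.measurable_ofReal.comp
    apply Measurable.const_mul
    refine Measurable.ite (measurableSet_preimage hkmeas ((Set.to_countable _).measurableSet
      (s := {x : ℤ | (j:ℤ) < x}))) ?_ measurable_const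
    exact (measurable_of_countable
      (fun y : Fin d → ℤ => (φ (y + (j+1) • e) - φ (y + j • e))^2)).comp hYmeas
  -- step 1: pointwise + integral term bounds
  have hm0 : (0:ℝ) ≤ (m:ℝ) := Nat.cast_nonneg m
  have hLHS : (∫⁻ z : Fin d → ℝ, ENNReal.ofReal
        ((stepExtension d N φ (z + s • (Pi.single i 1 : Fin d → ℝ)) - stepExtension d N φ z) ^ 2))
      ≤ (m : ℝ≥0∞) * (ENNReal.ofReal (min 1 t / (N:ℝ)^d)
          * ∑' y : Fin d → ℤ, ENNReal.ofReal ((m:ℝ) * (g y)^2)) := by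
    calc (∫⁻ z : Fin d → ℝ, ENNReal.ofReal
          ((stepExtension d N φ (z + s • (Pi.single i 1 : Fin d → ℝ)) - stepExtension d N φ z) ^ 2))
        ≤ ∫⁻ z : Fin d → ℝ, ∑ j ∈ Finset.range m, h j z :=
          lintegral_mono (fun z => pointwise_bound N hN0 φ i s hs z)
      _ = ∑ j ∈ Finset.range m, ∫⁻ z : Fin d → ℝ, h j z :=
          lintegral_finset_sum _ (fun j _ => hhmeas j)
      _ ≤ ∑ _j ∈ Finset.range m, (ENNReal.ofReal (min 1 t / (N:ℝ)^d)
            * ∑' y : Fin d → ℤ, ENNReal.ofReal ((m:ℝ) * (g y)^2)) := by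
          exact Finset.sum_le_sum fun j _ =>
            integral_term_le hN0 (by omega) φ i t ht0 (m:ℝ) hm0 j
      _ = (m : ℝ≥0∞) * (ENNReal.ofReal (min 1 t / (N:ℝ)^d)
            * ∑' y : Fin d → ℤ, ENNReal.ofReal ((m:ℝ) * (g y)^2)) := by
          rw [Finset.sum_const, Finset.card_range, nsmul_eq_mul]
  -- step 2: compare the lattice sum with the Dirichlet form sum
  have hnbr : ∀ y : Fin d → ℤ, IsLatticeNeighbor y (y + e) := by
    intro y
    unfold IsLatticeNeighbor
    have hterm : ∀ i' : Fin d, (y i' - (y + e) i')^2 = if i' = i then 1 else 0 := by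
      intro i'
      simp only [Pi.add_apply, hedef, Pi.single_apply]
      split_ifs <;> ring
    rw [Finset.sum_congr rfl (fun i' _ => hterm i')]
    simp
  have hFinj : Function.Injective (fun y : Fin d → ℤ =>
      (⟨(y, y + e), hnbr y⟩ : {p : (Fin d → ℤ) × (Fin d → ℤ) // IsLatticeNeighbor p.1 p.2})) := by
    intro y1 y2 h12
    exact congrArg (fun p => p.1.1) h12
  have hhalf : (∑' y : Fin d → ℤ, ENNReal.ofReal ((1/2) * (g y)^2)) ≤ T := by
    rw [hTdef]
    exact ENNReal.tsum_comp_le_tsum_of_injective hFinj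
      (fun p : {p : (Fin d → ℤ) × (Fin d → ℤ) // IsLatticeNeighbor p.1 p.2} =>
        ENNReal.ofReal ((1 / 2) * (φ p.1.2 - φ p.1.1) ^ 2))
  have hsum2 : (∑' y : Fin d → ℤ, ENNReal.ofReal ((m:ℝ) * (g y)^2))
      = ENNReal.ofReal (2*(m:ℝ)) * ∑' y : Fin d → ℤ, ENNReal.ofReal ((1/2) * (g y)^2) := by
    rw [← ENNReal.tsum_mul_left]
    refine tsum_congr fun y => ?_
    rw [← ENNReal.ofReal_mul (by positivity)]
    congr 1
    ring
  -- step 3: assemble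
  have hbound2 : (∫⁻ z : Fin d → ℝ, ENNReal.ofReal
        ((stepExtension d N φ (z + s • (Pi.single i 1 : Fin d → ℝ)) - stepExtension d N φ z) ^ 2))
      ≤ ENNReal.ofReal ((m:ℝ) * (min 1 t / (N:ℝ)^d) * (2*(m:ℝ))) * T := by
    refine hLHS.trans ?_
    rw [hsum2]
    calc (m : ℝ≥0∞) * (ENNReal.ofReal (min 1 t / (N:ℝ)^d)
          * (ENNReal.ofReal (2*(m:ℝ)) * ∑' y : Fin d → ℤ, ENNReal.ofReal ((1/2) * (g y)^2)))
        ≤ (m : ℝ≥0∞) * (ENNReal.ofReal (min 1 t / (N:ℝ)^d) * (ENNReal.ofReal (2*(m:ℝ)) * T)) := by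
          exact mul_le_mul_right (mul_le_mul_right (mul_le_mul_right hhalf _) _) _
      _ = ENNReal.ofReal ((m:ℝ) * (min 1 t / (N:ℝ)^d) * (2*(m:ℝ))) * T := by
          rw [← ENNReal.ofReal_natCast m, ← mul_assoc, ← mul_assoc,
            ← ENNReal.ofReal_mul hm0, ← ENNReal.ofReal_mul (by positivity)]
  refine hbound2.trans ?_
  -- step 4: the real-number inequality
  have hrpow : (N:ℝ) ^ ((d:ℝ) - 2) = (N:ℝ)^d / (N:ℝ)^2 := by
    rw [Real.rpow_sub hN0]
    congr 1
    · exact Real.rpow_natCast _ _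
    · have := Real.rpow_natCast (N:ℝ) 2
      push_cast at this
      exact this
  have hmt : (m:ℝ) ≤ t + 1 := by
    have h1 : (⌊t⌋ : ℝ) ≤ t := Int.floor_le t
    have h3 : ((⌊t⌋.toNat : ℕ) : ℝ) = (⌊t⌋ : ℝ) := by
      exact_mod_cast congrArg (fun n : ℤ => (n:ℝ)) (Int.toNat_of_nonneg hft)
    have h2 : (m:ℝ) = (⌊t⌋:ℝ) + 1 := by
      rw [hmdef, Nat.cast_add, Nat.cast_one, h3]
    linarith
  have hreal : (m:ℝ) * (min 1 t / (N:ℝ)^d) * (2*(m:ℝ))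
      ≤ 16 * s * max s (1/(N:ℝ)) * (1 / (2 * (N:ℝ) ^ ((d:ℝ) - 2))) := by
    have hmax : max s (1/(N:ℝ)) * N = max t 1 := by
      rw [max_mul_of_nonneg _ _ hN0.le, ← htdef, one_div, inv_mul_cancel₀ hN0.ne']
    have hNd : (0:ℝ) < (N:ℝ)^d := by positivity
    have hrhs : 16 * s * max s (1/(N:ℝ)) * (1 / (2 * (N:ℝ) ^ ((d:ℝ) - 2)))
        = 8 * t * max t 1 / (N:ℝ)^d := by
      rw [hrpow, ← hmax, htdef]
      field_simp
      ring
    rw [hrhs]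
    have hldiv : (m:ℝ) * (min 1 t / (N:ℝ)^d) * (2*(m:ℝ))
        = ((m:ℝ) * min 1 t * (2*(m:ℝ))) / (N:ℝ)^d := by ring
    rw [hldiv, div_le_div_iff_of_pos_right hNd]
    have hkey : (m:ℝ) * min 1 t * (2*(m:ℝ)) ≤ 8 * t * max t 1 := by
      rcases le_or_gt 1 t with h1t | h1t
      · rw [min_eq_left h1t, max_eq_left h1t, mul_one]
        nlinarith [hmt, ht0]
      · have hfl0 : ⌊t⌋ = 0 := Int.floor_eq_zero_iff.mpr ⟨ht0.le, h1t⟩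
        have hm1 : (m:ℝ) = 1 := by rw [hmdef, hfl0]; norm_num
        rw [hm1, min_eq_right h1t.le, max_eq_right h1t.le]
        nlinarith [ht0]
    exact hkey
  -- conclude
  have h16 : (0:ℝ) ≤ 16 * s * max s (1/(N:ℝ)) := by
    have := le_max_left s (1/(N:ℝ))
    nlinarith
  have hRHS : ENNReal.ofReal (16 * s * max s (1/(N:ℝ))) * discreteDirichletForm d N φ
      = ENNReal.ofReal (16 * s * max s (1/(N:ℝ)) * (1 / (2 * (N:ℝ) ^ ((d:ℝ) - 2)))) * T := by
    rw [discreteDirichletForm, ← hTdef, ← mul_assoc, ← ENNReal.ofReal_mul h16]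
  rw [hRHS]
  exact mul_le_mul_left (ENNReal.ofReal_le_ofReal hreal) T
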